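/- Let D be a directed graph, let c > 0, and let X, Y ⊆ V(D) be nonempty sets with e⃗(X, Y) ≥ c·|X|·|Y|. Then there exist nonempty sets X′ ⊆ X and Y′ ⊆ Y with X′ ∩ Y′ = ∅ such that every vertex of X′ has at least (c/8)·|Y| out-neighbors in Y′ and every vertex of Y′ has at least (c/8)·|X| in-neighbors in X′. -/

import Mathlib

/-- The number of directed edges from `A` to `B`. -/
noncomputable def dirEdges {V : Type*} (E : V → V → Prop) (A B : Set V) : ℕ :=
  {p : V × V | p.1 ∈ A ∧ p.2 ∈ B ∧ E p.1 p.2}.ncard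

open Finset
section
set_option linter.unusedSectionVars false
variable {V : Type} [DecidableEq V] (E : V → V → Prop) [DecidableRel E]

def fcnt (A B : Finset V) : ℕ := ((A ×ˢ B).filter fun p => E p.1 p.2).card

lemma fcnt_eq_sum_out (A B : Finset V) :
    fcnt E A B = ∑ a ∈ A, (B.filter fun b => E a b).card := by
  rw [fcnt, card_filter, Finset.sum_product]
  exact Finset.sum_congr rfl fun a _ => (card_filter _ _).symm

lemma fcnt_eq_sum_in (A B : Finset V) :
    fcnt E A B = ∑ b ∈ B, (A.filter fun a => E a b).card := by
  rw [fcnt, card_filter, Finset.sum_product_right]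
  exact Finset.sum_congr rfl fun b _ => (card_filter _ _).symm

lemma fcnt_erase_left {A : Finset V} {x : V} (hx : x ∈ A) (B : Finset V) :
    fcnt E A B = fcnt E (A.erase x) B + (B.filter fun b => E x b).card := by
  rw [fcnt_eq_sum_out, fcnt_eq_sum_out, ← Finset.sum_erase_add _ _ hx]

lemma fcnt_erase_right (A : Finset V) {B : Finset V} {y : V} (hy : y ∈ B) :
    fcnt E A B = fcnt E A (B.erase y) + (A.filter fun a => E a y).card := by
  rw [fcnt_eq_sum_in, fcnt_eq_sum_in, ← Finset.sum_erase_add _ _ hy]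

lemma fcnt_empty_left (B : Finset V) : fcnt E ∅ B = 0 := by simp [fcnt]

lemma fcnt_empty_right (A : Finset V) : fcnt E A ∅ = 0 := by simp [fcnt]

lemma dirEdges_coe (A B : Finset V) : dirEdges E ↑A ↑B = fcnt E A B := by
  rw [dirEdges, fcnt, ← Set.ncard_coe_finset]
  congr 1
  ext p
  simp [Finset.mem_product, and_assoc]

lemma pw_not_mem (Z : Finset V) (u : V) :
    Z.powerset.filter (fun S => u ∉ S) = (Z.erase u).powerset := by
  ext S
  simp [Finset.subset_erase, and_comm]

lemma pw_mem_card {Z : Finset V} {u : V} (hu : u ∈ Z) :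
    (Z.powerset.filter (fun S => u ∈ S)).card = 2 ^ (Z.card - 1) := by
  have h := Finset.card_filter_add_card_filter_not
    (s := Z.powerset) (p := fun S => u ∈ S)
  rw [pw_not_mem, card_powerset, card_powerset, card_erase_of_mem hu] at h
  have h1 : 1 ≤ Z.card := card_pos.mpr ⟨u, hu⟩
  have h2 : 2 ^ Z.card = 2 ^ (Z.card - 1) * 2 := by
    rw [← pow_succ, Nat.sub_add_cancel h1]
  omega

lemma pw_mem_not_mem_card {Z : Finset V} {u v : V} (hu : u ∈ Z) (hv : v ∈ Z) (huv : u ≠ v) :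
    (Z.powerset.filter (fun S => u ∈ S ∧ v ∉ S)).card = 2 ^ (Z.card - 2) := by
  have he : Z.powerset.filter (fun S => u ∈ S ∧ v ∉ S)
      = ((Z.erase v).powerset).filter (fun S => u ∈ S) := by
    ext S
    simp only [mem_filter, mem_powerset, Finset.subset_erase]
    tauto
  rw [he, pw_mem_card (Finset.mem_erase.mpr ⟨huv, hu⟩), card_erase_of_mem hv,
    show #Z - 1 - 1 = #Z - 2 by omega]

lemma pow_split (n k : ℕ) (h : k ≤ n) : 2 ^ n = 2 ^ k * 2 ^ (n - k) := by
  rw [← pow_add, Nat.add_sub_cancel' h]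

end

section
variable {V : Type} [DecidableEq V] (E : V → V → Prop) [DecidableRel E]

set_option maxHeartbeats 1000000 in
lemma exists_good_split (hloop : ∀ v, ¬ E v v) (X Y : Finset V) :
    ∃ S ⊆ X ∩ Y, fcnt E X Y ≤
      4 * fcnt E ((X \ Y) ∪ S) ((Y \ X) ∪ ((X ∩ Y) \ S)) := by
  classical
  set Z := X ∩ Y with hZ
  set EXY := (X ×ˢ Y).filter (fun p => E p.1 p.2) with hEXY
  have hfc : ∀ S ∈ Z.powerset,
      fcnt E ((X \ Y) ∪ S) ((Y \ X) ∪ (Z \ S))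
        = (EXY.filter (fun p => p.1 ∈ (X \ Y) ∪ S ∧ p.2 ∈ (Y \ X) ∪ (Z \ S))).card := by
    intro S hS
    rw [Finset.mem_powerset] at hS
    rw [fcnt]
    congr 1
    ext p
    have h1 : p.1 ∈ S → p.1 ∈ X ∧ p.1 ∈ Y := fun h => Finset.mem_inter.mp (hS h)
    simp only [hEXY, Finset.mem_filter, Finset.mem_product, Finset.mem_union,
      Finset.mem_sdiff, hZ, Finset.mem_inter]
    tauto
  have key : ∀ p ∈ EXY, 2 ^ Z.card ≤
      4 * (Z.powerset.filter
        (fun S => p.1 ∈ (X \ Y) ∪ S ∧ p.2 ∈ (Y \ X) ∪ (Z \ S))).card := by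
    rintro ⟨u, v⟩ hp
    simp only [hEXY, mem_filter, mem_product] at hp
    obtain ⟨⟨hu, hv⟩, hedge⟩ := hp
    have huv : u ≠ v := fun h => hloop u (h ▸ hedge)
    have hmono : Z.powerset.filter (fun S => ((u ∉ Y ∨ u ∈ S) ∧ (v ∉ X ∨ v ∉ S)))
        ⊆ Z.powerset.filter
          (fun S => u ∈ (X \ Y) ∪ S ∧ v ∈ (Y \ X) ∪ (Z \ S)) := by
      intro S hS
      simp only [mem_filter, mem_powerset] at hS ⊢
      obtain ⟨hSZ, hq1, hq2⟩ := hS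
      refine ⟨hSZ, ?_, ?_⟩
      · rcases hq1 with h | h
        · exact mem_union_left _ (mem_sdiff.mpr ⟨hu, h⟩)
        · exact mem_union_right _ h
      · rcases hq2 with h | h
        · exact mem_union_left _ (mem_sdiff.mpr ⟨hv, h⟩)
        · by_cases hvX : v ∈ X
          · exact mem_union_right _ (mem_sdiff.mpr ⟨mem_inter.mpr ⟨hvX, hv⟩, h⟩)
          · exact mem_union_left _ (mem_sdiff.mpr ⟨hv, hvX⟩)
    refine le_trans ?_ (Nat.mul_le_mul_left 4 (card_le_card hmono))
    by_cases huY : u ∈ Y <;> by_cases hvX : v ∈ X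
    · have huZ : u ∈ Z := mem_inter.mpr ⟨hu, huY⟩
      have hvZ : v ∈ Z := mem_inter.mpr ⟨hvX, hv⟩
      have hq : Z.powerset.filter (fun S => ((u ∉ Y ∨ u ∈ S) ∧ (v ∉ X ∨ v ∉ S)))
          = Z.powerset.filter (fun S => u ∈ S ∧ v ∉ S) := by
        apply filter_congr; intro S _; simp [huY, hvX]
      rw [hq, pw_mem_not_mem_card huZ hvZ huv]
      have h2 : 2 ≤ Z.card := Finset.one_lt_card.mpr ⟨u, huZ, v, hvZ, huv⟩
      rw [pow_split Z.card 2 h2]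
      omega
    · have huZ : u ∈ Z := mem_inter.mpr ⟨hu, huY⟩
      have hq : Z.powerset.filter (fun S => ((u ∉ Y ∨ u ∈ S) ∧ (v ∉ X ∨ v ∉ S)))
          = Z.powerset.filter (fun S => u ∈ S) := by
        apply filter_congr; intro S _; simp [huY, hvX]
      rw [hq, pw_mem_card huZ]
      have h1 : 1 ≤ Z.card := card_pos.mpr ⟨u, huZ⟩
      rw [pow_split Z.card 1 h1]
      omega
    · have hvZ : v ∈ Z := mem_inter.mpr ⟨hvX, hv⟩
      have hq : Z.powerset.filter (fun S => ((u ∉ Y ∨ u ∈ S) ∧ (v ∉ X ∨ v ∉ S)))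
          = Z.powerset.filter (fun S => v ∉ S) := by
        apply filter_congr; intro S _; simp [huY, hvX]
      rw [hq, pw_not_mem, card_powerset, card_erase_of_mem hvZ]
      have h1 : 1 ≤ Z.card := card_pos.mpr ⟨v, hvZ⟩
      rw [pow_split Z.card 1 h1]
      omega
    · have hq : Z.powerset.filter (fun S => ((u ∉ Y ∨ u ∈ S) ∧ (v ∉ X ∨ v ∉ S)))
          = Z.powerset := by
        apply filter_true_of_mem; intro S _; simp [huY, hvX]
      rw [hq, card_powerset]
      omega
  have swap : ∑ S ∈ Z.powerset,
      (EXY.filter (fun p => p.1 ∈ (X \ Y) ∪ S ∧ p.2 ∈ (Y \ X) ∪ (Z \ S))).card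
      = ∑ p ∈ EXY, (Z.powerset.filter
        (fun S => p.1 ∈ (X \ Y) ∪ S ∧ p.2 ∈ (Y \ X) ∪ (Z \ S))).card := by
    simp_rw [card_filter]
    exact Finset.sum_comm
  have htotal : EXY.card * 2 ^ Z.card ≤
      ∑ S ∈ Z.powerset, 4 * fcnt E ((X \ Y) ∪ S) ((Y \ X) ∪ (Z \ S)) := by
    calc EXY.card * 2 ^ Z.card = ∑ p ∈ EXY, 2 ^ Z.card := by
          rw [Finset.sum_const, smul_eq_mul]
      _ ≤ ∑ p ∈ EXY, 4 * (Z.powerset.filter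
            (fun S => p.1 ∈ (X \ Y) ∪ S ∧ p.2 ∈ (Y \ X) ∪ (Z \ S))).card :=
          Finset.sum_le_sum key
      _ = 4 * ∑ p ∈ EXY, (Z.powerset.filter
            (fun S => p.1 ∈ (X \ Y) ∪ S ∧ p.2 ∈ (Y \ X) ∪ (Z \ S))).card := by
          rw [Finset.mul_sum]
      _ = 4 * ∑ S ∈ Z.powerset,
            (EXY.filter (fun p => p.1 ∈ (X \ Y) ∪ S ∧ p.2 ∈ (Y \ X) ∪ (Z \ S))).card := by
          rw [swap]
      _ = ∑ S ∈ Z.powerset, 4 * fcnt E ((X \ Y) ∪ S) ((Y \ X) ∪ (Z \ S)) := by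
          rw [Finset.mul_sum]
          exact Finset.sum_congr rfl fun S hS => by rw [hfc S hS]
  have hne : Z.powerset.Nonempty := ⟨∅, Finset.empty_mem_powerset _⟩
  have hconst : ∑ _S ∈ Z.powerset, fcnt E X Y ≤
      ∑ S ∈ Z.powerset, 4 * fcnt E ((X \ Y) ∪ S) ((Y \ X) ∪ (Z \ S)) := by
    rw [Finset.sum_const, smul_eq_mul, card_powerset]
    have hfxy : fcnt E X Y = EXY.card := rfl
    rw [hfxy, Nat.mul_comm]
    exact htotal
  obtain ⟨S, hS, hle⟩ := Finset.exists_le_of_sum_le hne hconst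
  exact ⟨S, Finset.mem_powerset.mp hS, hle⟩

end

set_option maxHeartbeats 1000000

theorem statement7 (V : Type) [Finite V] (E : V → V → Prop) (hloop : ∀ v, ¬ E v v)
    (c : ℝ) (hc : 0 < c) (X Y : Set V) (hX : X.Nonempty) (hY : Y.Nonempty)
    (he : c * (X.ncard : ℝ) * (Y.ncard : ℝ) ≤ (dirEdges E X Y : ℝ)) :
    ∃ X' Y' : Set V, X' ⊆ X ∧ Y' ⊆ Y ∧ X'.Nonempty ∧ Y'.Nonempty ∧
      Disjoint X' Y' ∧
      (∀ x ∈ X', c / 8 * (Y.ncard : ℝ) ≤ ({y ∈ Y' | E x y}.ncard : ℝ)) ∧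
      (∀ y ∈ Y', c / 8 * (X.ncard : ℝ) ≤ ({x ∈ X' | E x y}.ncard : ℝ)) := by
  classical
  cases nonempty_fintype V
  set Xf := X.toFinset with hXf
  set Yf := Y.toFinset with hYf
  have hXcoe : (↑Xf : Set V) = X := Set.coe_toFinset X
  have hYcoe : (↑Yf : Set V) = Y := Set.coe_toFinset Y
  have hxcard : (X.ncard : ℝ) = (Xf.card : ℝ) := by
    rw [Set.ncard_eq_toFinset_card' X]
  have hycard : (Y.ncard : ℝ) = (Yf.card : ℝ) := by
    rw [Set.ncard_eq_toFinset_card' Y]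
  set xr : ℝ := (Xf.card : ℝ) with hxr
  set yr : ℝ := (Yf.card : ℝ) with hyr
  have hXfne : Xf.Nonempty := by
    rw [← Finset.coe_nonempty, hXcoe]; exact hX
  have hYfne : Yf.Nonempty := by
    rw [← Finset.coe_nonempty, hYcoe]; exact hY
  have hxr1 : (1 : ℝ) ≤ xr := by
    rw [hxr]; exact_mod_cast Finset.card_pos.mpr hXfne
  have hyr1 : (1 : ℝ) ≤ yr := by
    rw [hyr]; exact_mod_cast Finset.card_pos.mpr hYfne
  have hde : dirEdges E X Y = fcnt E Xf Yf := by
    rw [← hXcoe, ← hYcoe, dirEdges_coe]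
  have hE : c * xr * yr ≤ (fcnt E Xf Yf : ℝ) := by
    rw [← hde, ← hxcard, ← hycard]; exact he
  obtain ⟨S, hSZ, hsplit⟩ := exists_good_split E hloop Xf Yf
  set A0 := (Xf \ Yf) ∪ S with hA0
  set B0 := (Yf \ Xf) ∪ ((Xf ∩ Yf) \ S) with hB0
  have hA0X : A0 ⊆ Xf :=
    Finset.union_subset Finset.sdiff_subset (hSZ.trans Finset.inter_subset_left)
  have hB0Y : B0 ⊆ Yf :=
    Finset.union_subset Finset.sdiff_subset
      (Finset.sdiff_subset.trans Finset.inter_subset_right)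
  have hdisj0 : Disjoint A0 B0 := by
    rw [Finset.disjoint_left]
    intro a ha hb
    have haX : a ∈ Xf := hA0X ha
    simp only [hA0, hB0, Finset.mem_union, Finset.mem_sdiff, Finset.mem_inter] at ha hb
    rcases hb with h | h
    · exact h.2 haX
    · rcases ha with h' | h'
      · exact h'.2 h.1.2
      · exact h.2 h'
  have h4c : (fcnt E Xf Yf : ℝ) ≤ 4 * (fcnt E A0 B0 : ℝ) := by
    exact_mod_cast hsplit
  -- the objective function
  set f : Finset V × Finset V → ℝ :=
    fun p => (fcnt E p.1 p.2 : ℝ) - c / 8 * (yr * p.1.card + xr * p.2.card) with hf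
  set s : Finset (Finset V × Finset V) :=
    Finset.univ.filter (fun p => p.1 ⊆ Xf ∧ p.2 ⊆ Yf ∧ Disjoint p.1 p.2) with hs
  have hs0 : (A0, B0) ∈ s := by
    simp only [hs, Finset.mem_filter, Finset.mem_univ, true_and]
    exact ⟨hA0X, hB0Y, hdisj0⟩
  obtain ⟨p, hps, hpmax⟩ := Finset.exists_max_image s
    (fun p => toLex (f p, p.1.card + p.2.card)) ⟨(A0, B0), hs0⟩
  simp only [hs, Finset.mem_filter, Finset.mem_univ, true_and] at hps
  obtain ⟨hpA, hpB, hdisj⟩ := hps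
  -- degree conditions
  have hdegA : ∀ x ∈ p.1, c / 8 * yr ≤ ((p.2.filter fun b => E x b).card : ℝ) := by
    intro x hx
    have hmem : (p.1.erase x, p.2) ∈ s := by
      simp only [hs, Finset.mem_filter, Finset.mem_univ, true_and]
      exact ⟨(Finset.erase_subset _ _).trans hpA, hpB,
        hdisj.mono_left (Finset.erase_subset _ _)⟩
    have hle := hpmax _ hmem
    rw [Prod.Lex.le_iff] at hle
    have hfle : f (p.1.erase x, p.2) ≤ f p := by
      rcases hle with h | h
      · exact le_of_lt h
      · exact le_of_eq h.1
    have hcard : (p.1.card : ℝ) = ((p.1.erase x).card : ℝ) + 1 := by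
      exact_mod_cast (Finset.card_erase_add_one hx).symm
    have hFr : (fcnt E p.1 p.2 : ℝ)
        = (fcnt E (p.1.erase x) p.2 : ℝ) + ((p.2.filter fun b => E x b).card : ℝ) := by
      exact_mod_cast congrArg (Nat.cast : ℕ → ℝ) (fcnt_erase_left E hx p.2)
    simp only [hf] at hfle
    rw [hFr, hcard] at hfle
    linarith [hfle]
  have hdegB : ∀ y ∈ p.2, c / 8 * xr ≤ ((p.1.filter fun a => E a y).card : ℝ) := by
    intro y hy
    have hmem : (p.1, p.2.erase y) ∈ s := by
      simp only [hs, Finset.mem_filter, Finset.mem_univ, true_and]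
      exact ⟨hpA, (Finset.erase_subset _ _).trans hpB,
        hdisj.mono_right (Finset.erase_subset _ _)⟩
    have hle := hpmax _ hmem
    rw [Prod.Lex.le_iff] at hle
    have hfle : f (p.1, p.2.erase y) ≤ f p := by
      rcases hle with h | h
      · exact le_of_lt h
      · exact le_of_eq h.1
    have hcard : (p.2.card : ℝ) = ((p.2.erase y).card : ℝ) + 1 := by
      exact_mod_cast (Finset.card_erase_add_one hy).symm
    have hFr : (fcnt E p.1 p.2 : ℝ)
        = (fcnt E p.1 (p.2.erase y) : ℝ) + ((p.1.filter fun a => E a y).card : ℝ) := by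
      exact_mod_cast congrArg (Nat.cast : ℕ → ℝ) (fcnt_erase_right E p.1 hy)
    simp only [hf] at hfle
    rw [hFr, hcard] at hfle
    linarith [hfle]
  -- nonemptiness
  have hf0 : 0 ≤ f (A0, B0) := by
    have h1 : (A0.card : ℝ) ≤ xr := by
      rw [hxr]; exact_mod_cast Finset.card_le_card hA0X
    have h2 : (B0.card : ℝ) ≤ yr := by
      rw [hyr]; exact_mod_cast Finset.card_le_card hB0Y
    have h3 : (0 : ℝ) ≤ (A0.card : ℝ) := Nat.cast_nonneg _
    have h4 : (0 : ℝ) ≤ (B0.card : ℝ) := Nat.cast_nonneg _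
    have hA : 0 ≤ c * (yr * (xr - (A0.card : ℝ))) :=
      mul_nonneg hc.le (mul_nonneg (by linarith) (by linarith))
    have hB : 0 ≤ c * (xr * (yr - (B0.card : ℝ))) :=
      mul_nonneg hc.le (mul_nonneg (by linarith) (by linarith))
    simp only [hf]
    nlinarith [hE, h4c, hA, hB]
  have hne : p.1.Nonempty ∧ p.2.Nonempty := by
    by_contra hcon
    rw [not_and_or, Finset.not_nonempty_iff_eq_empty, Finset.not_nonempty_iff_eq_empty] at hcon
    have hFz : (fcnt E p.1 p.2 : ℝ) = 0 := by
      rcases hcon with h | h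
      · rw [h, fcnt_empty_left]; norm_num
      · rw [h, fcnt_empty_right]; norm_num
    have hc1 : (0 : ℝ) ≤ (p.1.card : ℝ) := Nat.cast_nonneg _
    have hc2 : (0 : ℝ) ≤ (p.2.card : ℝ) := Nat.cast_nonneg _
    have hfp : f p ≤ 0 := by
      have hA : 0 ≤ c * (yr * (p.1.card : ℝ)) :=
        mul_nonneg hc.le (mul_nonneg (by linarith) hc1)
      have hB : 0 ≤ c * (xr * (p.2.card : ℝ)) :=
        mul_nonneg hc.le (mul_nonneg (by linarith) hc2)
      simp only [hf]
      linarith [hFz, hA, hB]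
    have hle0 := hpmax (A0, B0) hs0
    rw [Prod.Lex.le_iff] at hle0
    rcases hle0 with h | h
    · simp only [ofLex_toLex] at h; linarith
    · obtain ⟨hfeq, hcardle⟩ := h
      simp only [ofLex_toLex] at hfeq hcardle
      have hfpz : f p = 0 := by linarith
      have hsum0 : yr * (p.1.card : ℝ) + xr * (p.2.card : ℝ) = 0 := by
        simp only [hf] at hfpz
        have : c / 8 * (yr * p.1.card + xr * p.2.card) = 0 := by linarith
        have hc8 : c / 8 > 0 := by linarith
        nlinarith [this]
      have hp1z : p.1.card = 0 := by
        have hx0 : (p.1.card : ℝ) ≤ 0 := by nlinarith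
        exact_mod_cast le_antisymm (by exact_mod_cast hx0) (Nat.zero_le _)
      have hp2z : p.2.card = 0 := by
        have hx0 : (p.2.card : ℝ) ≤ 0 := by nlinarith
        exact_mod_cast le_antisymm (by exact_mod_cast hx0) (Nat.zero_le _)
      rw [hp1z, hp2z] at hcardle
      have hA0z : A0 = ∅ := Finset.card_eq_zero.mp (by omega)
      rw [hA0z, fcnt_empty_left] at h4c
      norm_num at h4c
      have hFXYz : (fcnt E Xf Yf : ℝ) = 0 := by rw [h4c]; norm_num
      have hx0 : (0 : ℝ) < xr := by linarith
      have hy0 : (0 : ℝ) < yr := by linarith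
      have hpos := mul_pos (mul_pos hc hx0) hy0
      linarith [hE, hpos, hFXYz]
  obtain ⟨hne1, hne2⟩ := hne
  refine ⟨↑p.1, ↑p.2, ?_, ?_, ?_, ?_, ?_, ?_, ?_⟩
  · rw [← hXcoe]; exact Finset.coe_subset.mpr hpA
  · rw [← hYcoe]; exact Finset.coe_subset.mpr hpB
  · exact Finset.coe_nonempty.mpr hne1
  · exact Finset.coe_nonempty.mpr hne2
  · exact Finset.disjoint_coe.mpr hdisj
  · intro x hx
    have hx' : x ∈ p.1 := hx
    have hset : {y ∈ (↑p.2 : Set V) | E x y} = ↑(p.2.filter fun y => E x y) := by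
      ext y; simp
    rw [hset, Set.ncard_coe_finset, hycard]
    exact hdegA x hx'
  · intro y hy
    have hy' : y ∈ p.2 := hy
    have hset : {x ∈ (↑p.1 : Set V) | E x y} = ↑(p.1.filter fun a => E a y) := by
      ext a; simp
    rw [hset, Set.ncard_coe_finset, hxcard]
    exact hdegB y hy'
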